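/- arXiv:1203.3672 — 3 statements merged into one kernel-verified Lean document; each statement's English description precedes it below -/
import Mathlib

section
/- Let S_1,…,S_I be independent Bernoulli random variables with Pr(S_i=1)=p_i where 1/(1+Γ) ≤ p_i ≤ Γ/(1+Γ) for each i, and let a_1,…,a_I ≥ 0 be fixed nonnegative scores. Then for every k, Pr(Σ a_i T̲_i ≥ k) ≤ Pr(Σ a_i S_i ≥ k) ≤ Pr(Σ a_i T̄_i ≥ k), where T̲_i are i.i.d. Bernoulli(1/(1+Γ)) and T̄_i are i.i.d. Bernoulli(Γ/(1+Γ)). -/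
open MeasureTheory
open Finset ENNReal


lemma twopoint (p q x y : ℝ≥0∞) (hpq : p ≤ q) (hq1 : q ≤ 1) (hyx : y ≤ x) :
    p * x + (1 - p) * y ≤ q * x + (1 - q) * y := by
  have h1 : 1 - p = (1 - q) + (q - p) := (tsub_add_tsub_cancel hq1 hpq).symm
  rw [h1, add_mul]
  calc p * x + ((1 - q) * y + (q - p) * y)
      ≤ p * x + ((1 - q) * y + (q - p) * x) := by gcongr
    _ = (p + (q - p)) * x + (1 - q) * y := by ring
    _ = q * x + (1 - q) * y := by rw [add_tsub_cancel_of_le hpq]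

lemma pair_sum {I : ℕ} {M : Type*} [AddCommMonoid M] (j : Fin I)
    (g : (Fin I → Bool) → M) :
    ∑ ω : Fin I → Bool, g ω
      = ∑ ω ∈ univ.filter (fun ω => ω j = false),
          (g ω + g (Function.update ω j true)) := by
  rw [Finset.sum_add_distrib]
  rw [← Finset.sum_filter_add_sum_filter_not univ (fun ω => ω j = false) g]
  congr 1
  refine (Finset.sum_nbij' (fun ω => Function.update ω j true)
    (fun ω => Function.update ω j false) ?_ ?_ ?_ ?_ ?_).symm
  · intro ω hω; simp
  · intro ω hω; simp at hω ⊢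
  · intro ω hω
    simp only [mem_filter, mem_univ, true_and] at hω
    funext i
    by_cases h : i = j
    · subst h; simp [hω]
    · simp [Function.update_of_ne h]
  · intro ω hω
    simp only [mem_filter, mem_univ, true_and] at hω
    funext i
    by_cases h : i = j
    · subst h; simp [Bool.not_eq_false] at hω; simp [hω]
    · simp [Function.update_of_ne h]
  · intro ω hω; rfl


lemma swap_one {I : ℕ} (u v : Fin I → ℝ≥0∞) (j : Fin I)
    (huv : ∀ i, i ≠ j → u i = v i) (hj : u j ≤ v j) (hv1 : v j ≤ 1)
    (A : Finset (Fin I → Bool))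
    (hA : ∀ ω ∈ A, Function.update ω j true ∈ A) :
    ∑ ω ∈ A, ∏ i, (bif ω i then u i else 1 - u i)
      ≤ ∑ ω ∈ A, ∏ i, (bif ω i then v i else 1 - v i) := by
  classical
  have expand : ∀ r : Fin I → ℝ≥0∞,
      ∑ ω ∈ A, ∏ i, (bif ω i then r i else 1 - r i)
        = ∑ ω : Fin I → Bool,
            (if ω ∈ A then (1:ℝ≥0∞) else 0) * ∏ i, (bif ω i then r i else 1 - r i) := by
    intro r
    simp only [ite_mul, one_mul, zero_mul]
    rw [Finset.sum_ite_mem, Finset.univ_inter]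
  rw [expand u, expand v, pair_sum j, pair_sum j]
  apply Finset.sum_le_sum
  intro ω hω
  simp only [mem_filter, mem_univ, true_and] at hω
  set χ : ℝ≥0∞ := if ω ∈ A then 1 else 0 with hχdef
  set χ' : ℝ≥0∞ := if Function.update ω j true ∈ A then 1 else 0 with hχ'def
  set C : ℝ≥0∞ := ∏ i ∈ univ.erase j, (bif ω i then v i else 1 - v i) with hC
  have hupd : ∀ i, i ≠ j → Function.update ω j true i = ω i := by
    intro i hi; exact Function.update_of_ne hi _ _
  have erase_eq : ∀ r : Fin I → ℝ≥0∞, (∀ i, i ≠ j → r i = v i) →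
      ∀ σ : Fin I → Bool, (∀ i, i ≠ j → σ i = ω i) →
      ∏ i ∈ univ.erase j, (bif σ i then r i else 1 - r i) = C := by
    intro r hr σ hσ
    apply Finset.prod_congr rfl
    intro i hi
    have hij : i ≠ j := (Finset.mem_erase.mp hi).1
    rw [hr i hij, hσ i hij]
  have e1 : ∏ i, (bif ω i then u i else 1 - u i) = (1 - u j) * C := by
    rw [← Finset.mul_prod_erase univ _ (mem_univ j), hω,
      erase_eq u (fun i hi => huv i hi) ω (fun _ _ => rfl)]
    rfl
  have e2 : ∏ i, (bif Function.update ω j true i then u i else 1 - u i)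
      = u j * C := by
    rw [← Finset.mul_prod_erase univ _ (mem_univ j), Function.update_self,
      erase_eq u (fun i hi => huv i hi) _ hupd]
    rfl
  have e3 : ∏ i, (bif ω i then v i else 1 - v i) = (1 - v j) * C := by
    rw [← Finset.mul_prod_erase univ _ (mem_univ j), hω,
      erase_eq v (fun _ _ => rfl) ω (fun _ _ => rfl)]
    rfl
  have e4 : ∏ i, (bif Function.update ω j true i then v i else 1 - v i)
      = v j * C := by
    rw [← Finset.mul_prod_erase univ _ (mem_univ j), Function.update_self,
      erase_eq v (fun _ _ => rfl) _ hupd]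
    rfl
  rw [e1, e2, e3, e4]
  have hchi : χ ≤ χ' := by
    rw [hχdef, hχ'def]
    split_ifs with h1 h2
    · exact le_rfl
    · exact absurd (hA ω h1) h2
    · exact zero_le
    · exact le_rfl
  have key := twopoint (u j) (v j) (χ' * C) (χ * C) hj hv1
    (mul_le_mul_left hchi C)
  calc χ * ((1 - u j) * C) + χ' * (u j * C)
      = u j * (χ' * C) + (1 - u j) * (χ * C) := by ring
    _ ≤ v j * (χ' * C) + (1 - v j) * (χ * C) := key
    _ = χ * ((1 - v j) * C) + χ' * (v j * C) := by ring

lemma key_mono {I : ℕ} (p q : Fin I → ℝ≥0∞) (hpq : ∀ i, p i ≤ q i)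
    (hq1 : ∀ i, q i ≤ 1) (A : Finset (Fin I → Bool))
    (hA : ∀ ω ∈ A, ∀ j, Function.update ω j true ∈ A) :
    ∑ ω ∈ A, ∏ i, (bif ω i then p i else 1 - p i)
      ≤ ∑ ω ∈ A, ∏ i, (bif ω i then q i else 1 - q i) := by
  classical
  have main : ∀ s : Finset (Fin I),
      ∑ ω ∈ A, ∏ i, (bif ω i then p i else 1 - p i)
        ≤ ∑ ω ∈ A, ∏ i, (bif ω i then (if i ∈ s then q i else p i)
            else 1 - (if i ∈ s then q i else p i)) := by
    intro s
    induction s using Finset.induction_on with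
    | empty => simp
    | @insert j s hj ih =>
      refine ih.trans (swap_one _ _ j ?_ ?_ ?_ A (fun ω hω => hA ω hω j))
      · intro i hi
        simp [Finset.mem_insert, hi]
      · simp [hj]
        exact hpq j
      · simp [hq1 j]
  simpa using main Finset.univ

lemma pi_bernoulli_apply {I : ℕ} (r : Fin I → NNReal) (hr : ∀ i, r i ≤ 1)
    (A : Set (Fin I → Bool)) :
    Measure.pi (fun i => (PMF.bernoulli (r i) (hr i)).toMeasure) A
      = ∑ ω ∈ A.toFinite.toFinset, ∏ i, (bif ω i then (r i : ℝ≥0∞) else 1 - (r i : ℝ≥0∞)) := by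
  classical
  have hsingle : ∀ ω : Fin I → Bool,
      Measure.pi (fun i => (PMF.bernoulli (r i) (hr i)).toMeasure) {ω}
        = ∏ i, (bif ω i then (r i : ℝ≥0∞) else 1 - (r i : ℝ≥0∞)) := by
    intro ω
    rw [← Set.univ_pi_singleton ω, Measure.pi_pi]
    refine Finset.prod_congr rfl fun i _ => ?_
    rw [PMF.toMeasure_apply_singleton _ _ (measurableSet_singleton _)]
    rfl
  calc Measure.pi (fun i => (PMF.bernoulli (r i) (hr i)).toMeasure) A
      = Measure.pi (fun i => (PMF.bernoulli (r i) (hr i)).toMeasure)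
          (⋃ ω ∈ A.toFinite.toFinset, {ω}) := by
        congr 1
        ext x
        simp
    _ = ∑ ω ∈ A.toFinite.toFinset,
          Measure.pi (fun i => (PMF.bernoulli (r i) (hr i)).toMeasure) {ω} := by
        refine measure_biUnion_finset ?_ fun ω _ => measurableSet_singleton ω
        intro x _ y _ hxy
        simp [Set.disjoint_singleton, hxy]
    _ = _ := Finset.sum_congr rfl fun ω _ => hsingle ω
/-- Sensitivity bounds for weighted sums of independent Bernoulli indicators: if
`S_i` are independent Bernoulli with probabilities `p_i ∈ [1/(1+Γ), Γ/(1+Γ)]` and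
`a_i ≥ 0`, then for every `k`, the upper-tail probability of `Σ a_i S_i` lies between
those of the i.i.d. Bernoulli(`1/(1+Γ)`) sum and the i.i.d. Bernoulli(`Γ/(1+Γ)`) sum. -/
theorem stmt_2 (I : ℕ) (Γ : ℝ) (hΓ : 1 ≤ Γ) (p : Fin I → ℝ)
    (hplo : ∀ i, 1 / (1 + Γ) ≤ p i) (hphi : ∀ i, p i ≤ Γ / (1 + Γ))
    (a : Fin I → ℝ) (ha : ∀ i, 0 ≤ a i)
    (hp1 : ∀ i, ENNReal.ofReal (p i) ≤ 1)
    (hlo1 : ENNReal.ofReal (1 / (1 + Γ)) ≤ 1)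
    (hhi1 : ENNReal.ofReal (Γ / (1 + Γ)) ≤ 1) :
    ∀ k : ℝ,
      (Measure.pi fun _ : Fin I =>
            (PMF.bernoulli (Real.toNNReal (1 / (1 + Γ))) (ENNReal.coe_le_one_iff.mp hlo1)).toMeasure)
          {ω : Fin I → Bool | k ≤ ∑ i, a i * (if ω i then 1 else 0)}
        ≤ (Measure.pi fun i : Fin I =>
              (PMF.bernoulli (Real.toNNReal (p i)) (ENNReal.coe_le_one_iff.mp (hp1 i))).toMeasure)
            {ω : Fin I → Bool | k ≤ ∑ i, a i * (if ω i then 1 else 0)} ∧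
      (Measure.pi fun i : Fin I =>
            (PMF.bernoulli (Real.toNNReal (p i)) (ENNReal.coe_le_one_iff.mp (hp1 i))).toMeasure)
          {ω : Fin I → Bool | k ≤ ∑ i, a i * (if ω i then 1 else 0)}
        ≤ (Measure.pi fun _ : Fin I =>
              (PMF.bernoulli (Real.toNNReal (Γ / (1 + Γ))) (ENNReal.coe_le_one_iff.mp hhi1)).toMeasure)
            {ω : Fin I → Bool | k ≤ ∑ i, a i * (if ω i then 1 else 0)} := by
  intro k
  set A : Set (Fin I → Bool) :=
    {ω : Fin I → Bool | k ≤ ∑ i, a i * (if ω i then 1 else 0)} with hAdef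
  have hAup : ∀ ω ∈ A.toFinite.toFinset, ∀ j,
      Function.update ω j true ∈ A.toFinite.toFinset := by
    intro ω hω j
    rw [Set.Finite.mem_toFinset] at hω ⊢
    simp only [hAdef, Set.mem_setOf_eq] at hω ⊢
    refine le_trans hω (Finset.sum_le_sum fun i _ => ?_)
    by_cases h : i = j
    · subst h
      rw [Function.update_self]
      have : (if ω i then (1:ℝ) else 0) ≤ 1 := by split_ifs <;> norm_num
      calc a i * (if ω i then (1:ℝ) else 0) ≤ a i * 1 :=
            mul_le_mul_of_nonneg_left this (ha i)
        _ = a i * (if true then (1:ℝ) else 0) := by norm_num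
    · rw [Function.update_of_ne h]
  have eqlo : (Measure.pi fun _ : Fin I =>
        (PMF.bernoulli (Real.toNNReal (1 / (1 + Γ))) (ENNReal.coe_le_one_iff.mp hlo1)).toMeasure) A
      = ∑ ω ∈ A.toFinite.toFinset,
          ∏ i, (bif ω i then ENNReal.ofReal (1 / (1 + Γ))
            else 1 - ENNReal.ofReal (1 / (1 + Γ))) :=
    pi_bernoulli_apply (fun _ => Real.toNNReal (1 / (1 + Γ))) (fun _ => ENNReal.coe_le_one_iff.mp hlo1) A
  have eqp : (Measure.pi fun i : Fin I =>
        (PMF.bernoulli (Real.toNNReal (p i)) (ENNReal.coe_le_one_iff.mp (hp1 i))).toMeasure) A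
      = ∑ ω ∈ A.toFinite.toFinset,
          ∏ i, (bif ω i then ENNReal.ofReal (p i) else 1 - ENNReal.ofReal (p i)) :=
    pi_bernoulli_apply (fun i => Real.toNNReal (p i)) (fun i => ENNReal.coe_le_one_iff.mp (hp1 i)) A
  have eqhi : (Measure.pi fun _ : Fin I =>
        (PMF.bernoulli (Real.toNNReal (Γ / (1 + Γ))) (ENNReal.coe_le_one_iff.mp hhi1)).toMeasure) A
      = ∑ ω ∈ A.toFinite.toFinset,
          ∏ i, (bif ω i then ENNReal.ofReal (Γ / (1 + Γ))
            else 1 - ENNReal.ofReal (Γ / (1 + Γ))) :=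
    pi_bernoulli_apply (fun _ => Real.toNNReal (Γ / (1 + Γ))) (fun _ => ENNReal.coe_le_one_iff.mp hhi1) A
  constructor
  · rw [eqlo, eqp]
    exact key_mono _ _ (fun i => ENNReal.ofReal_le_ofReal (hplo i)) hp1
      A.toFinite.toFinset hAup
  · rw [eqp, eqhi]
    exact key_mono _ _ (fun i => ENNReal.ofReal_le_ofReal (hphi i))
      (fun _ => hhi1) A.toFinite.toFinset hAup
end

section
/- Let B̄₁ ~ Bin(I₁, κ) and B̄₂ ~ Bin(I₂, κ) be independent with κ = Γ/(1+Γ), and let g be a monotone increasing function of two arguments. If (B₁, B₂) are independent with B₁ a sum of independent Bernoulli(p_{1i}) and B₂ a sum of independent Bernoulli(p_{2i}), where all p's lie in [1/(1+Γ), Γ/(1+Γ)], then Pr(g(B₁,B₂) ≥ k) ≤ Pr(g(B̄₁,B̄₂) ≥ k) for every k. -/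
open MeasureTheory Finset
open scoped ENNReal

/-- The older Mathlib `PMF.bernoulli`, which took an `ℝ≥0∞` parameter: probability `p` to
`true` and `1 - p` to `false`. -/
noncomputable def PMF.bernoulliENNReal (p : ENNReal) (h : p ≤ 1) : PMF Bool :=
  PMF.ofFintype (fun b => cond b p (1 - p)) (by simp [h])

lemma key_ineq (A B w w' P : ℝ≥0∞) (hAB : A ≤ B) (hww' : w ≤ w') (hw' : w' ≤ 1) :
    A * ((1 - w) * P) + B * (w * P) ≤ A * ((1 - w') * P) + B * (w' * P) := by
  have h1 : (1 - w') + (w' - w) = 1 - w := tsub_add_tsub_cancel hw' hww'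
  have h2 : (w' - w) + w = w' := tsub_add_cancel_of_le hww'
  have h3 : A * ((1 - w') * P) + A * ((w' - w) * P) = A * ((1 - w) * P) := by
    rw [← mul_add, ← add_mul, h1]
  have h4 : B * ((w' - w) * P) + B * (w * P) = B * (w' * P) := by
    rw [← mul_add, ← add_mul, h2]
  calc A * ((1 - w) * P) + B * (w * P)
      = A * ((1 - w') * P) + (A * ((w' - w) * P) + B * (w * P)) := by
        rw [← add_assoc, h3]
    _ ≤ A * ((1 - w') * P) + (B * ((w' - w) * P) + B * (w * P)) := by
        gcongr
    _ = A * ((1 - w') * P) + B * (w' * P) := by rw [h4]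

variable {ι : Type*} [Fintype ι] [DecidableEq ι]

/-- weight of a Bernoulli outcome -/
noncomputable def wt (w : ℝ≥0∞) (b : Bool) : ℝ≥0∞ := bif b then w else 1 - w

lemma step (F : (ι → Bool) → ℝ≥0∞) (hF : Monotone F) (W : ι → ℝ≥0∞) (j : ι) (c : ℝ≥0∞)
    (h1 : W j ≤ c) (h2 : c ≤ 1) :
    ∑ x, F x * ∏ i, wt (W i) (x i) ≤
      ∑ x, F x * ∏ i, wt (Function.update W j c i) (x i) := by
  classical
  set e := Equiv.funSplitAt j Bool with he
  have hsum : ∀ V : ι → ℝ≥0∞,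
      ∑ x, F x * ∏ i, wt (V i) (x i)
        = ∑ z : { k // k ≠ j } → Bool,
            (F (e.symm (true, z)) * (V j * ∏ i ∈ Finset.univ.erase j, wt (V i) (e.symm (true, z) i))
              + F (e.symm (false, z)) * ((1 - V j) * ∏ i ∈ Finset.univ.erase j, wt (V i) (e.symm (false, z) i))) := by
    intro V
    rw [← Equiv.sum_comp e.symm (fun x => F x * ∏ i, wt (V i) (x i)), Fintype.sum_prod_type,
      Fintype.sum_bool]
    rw [← Finset.sum_add_distrib]
    refine Finset.sum_congr rfl fun z _ => ?_
    have hj : ∀ b, e.symm (b, z) j = b := by intro b; simp [he]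
    have hprod : ∀ b, ∏ i, wt (V i) (e.symm (b, z) i)
        = wt (V j) b * ∏ i ∈ Finset.univ.erase j, wt (V i) (e.symm (b, z) i) := by
      intro b
      rw [← Finset.mul_prod_erase Finset.univ _ (Finset.mem_univ j), hj]
    rw [hprod, hprod]
    simp [wt]
  rw [hsum, hsum]
  refine Finset.sum_le_sum fun z _ => ?_
  have hoff : ∀ (b : Bool) (i : ι) (hi : i ≠ j), e.symm (b, z) i = z ⟨i, hi⟩ := by
    intro b i hi; simp [he, hi]
  have hPeq : ∀ b (V : ι → ℝ≥0∞) c', ∏ i ∈ Finset.univ.erase j, wt (Function.update V j c' i) (e.symm (b, z) i)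
      = ∏ i ∈ Finset.univ.erase j, wt (V i) (e.symm (b, z) i) := by
    intro b V c'
    refine Finset.prod_congr rfl fun i hi => ?_
    rw [Function.update_of_ne (Finset.mem_erase.1 hi).1]
  have hPbeq : ∏ i ∈ Finset.univ.erase j, wt (W i) (e.symm (true, z) i)
      = ∏ i ∈ Finset.univ.erase j, wt (W i) (e.symm (false, z) i) := by
    refine Finset.prod_congr rfl fun i hi => ?_
    rw [hoff true i (Finset.mem_erase.1 hi).1, hoff false i (Finset.mem_erase.1 hi).1]
  have hle : e.symm (false, z) ≤ e.symm (true, z) := by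
    intro i
    by_cases hi : i = j
    · subst hi; simp [he]
    · rw [hoff true i hi, hoff false i hi]
  rw [hPeq, hPeq, Function.update_self, hPbeq]
  have h := key_ineq (F (e.symm (false, z))) (F (e.symm (true, z))) (W j) c
    (∏ i ∈ Finset.univ.erase j, wt (W i) (e.symm (false, z) i)) (hF hle) h1 h2
  exact (add_comm _ _).trans_le (h.trans_eq (add_comm _ _))

-- measure of a set in a finite discrete space as a finite sum
lemma meas_eq_sum {α : Type*} [Fintype α] [MeasurableSpace α] [MeasurableSingletonClass α]
    (μ : Measure α) (s : Set α) [DecidablePred (· ∈ s)] :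
    μ s = ∑ x ∈ Finset.univ.filter (· ∈ s), μ {x} := by
  rw [← measure_biUnion_finset]
  · congr 1
    ext x; simp
  · intro x hx y hy hxy
    simp [Function.onFun, Set.disjoint_singleton, hxy]
  · intro b _; exact measurableSet_singleton b
lemma sum_mono (F : (ι → Bool) → ℝ≥0∞) (hF : Monotone F) (p q : ι → ℝ≥0∞)
    (hpq : ∀ i, p i ≤ q i) (hq : ∀ i, q i ≤ 1) :
    ∑ x, F x * ∏ i, wt (p i) (x i) ≤ ∑ x, F x * ∏ i, wt (q i) (x i) := by
  classical
  have main : ∀ s : Finset ι,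
      ∑ x, F x * ∏ i, wt (p i) (x i) ≤
        ∑ x, F x * ∏ i, wt (if i ∈ s then q i else p i) (x i) := by
    intro s
    induction s using Finset.induction_on with
    | empty => simp
    | @insert j s hj ih =>
      refine ih.trans ?_
      have hupd : ∀ i, (if i ∈ insert j s then q i else p i)
          = Function.update (fun i => if i ∈ s then q i else p i) j (q j) i := by
        intro i
        by_cases hi : i = j
        · subst hi; simp [hj]
        · simp [Function.update_of_ne hi, Finset.mem_insert, hi]
      have h1 : (if j ∈ s then q j else p j) ≤ q j := by
        by_cases hjs : j ∈ s <;> simp [hjs, hpq j]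
      have := step F hF (fun i => if i ∈ s then q i else p i) j (q j) h1 (hq j)
      calc ∑ x, F x * ∏ i, wt (if i ∈ s then q i else p i) (x i)
          ≤ ∑ x, F x * ∏ i, wt (Function.update (fun i => if i ∈ s then q i else p i) j (q j) i) (x i) := this
        _ = _ := by simp only [hupd]
  simpa using main Finset.univ
lemma pi_bern_singleton {n : ℕ} (p : Fin n → ℝ≥0∞) (hp : ∀ i, p i ≤ 1) (a : Fin n → Bool) :
    (Measure.pi fun i => (PMF.bernoulliENNReal (p i) (hp i)).toMeasure) {a} = ∏ i, wt (p i) (a i) := by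
  rw [← Set.univ_pi_singleton a, Measure.pi_pi]
  refine Finset.prod_congr rfl fun i _ => ?_
  rw [PMF.toMeasure_apply_singleton _ _ (measurableSet_singleton _), PMF.bernoulliENNReal, PMF.ofFintype_apply]
  rfl

lemma card_mono {n : ℕ} {a a' : Fin n → Bool} (h : a ≤ a') :
    (Finset.univ.filter fun i => a i).card ≤ (Finset.univ.filter fun i => a' i).card := by
  apply Finset.card_le_card
  intro i hi
  simp only [Finset.mem_filter, Finset.mem_univ, true_and] at hi ⊢
  exact Bool.le_iff_imp.1 (h i) hi

/-- Upper sensitivity bound of Rosenbaum's model: if `B₁` is a sum of independent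
Bernoulli(`p₁ᵢ`) indicators and `B₂` an independent sum of independent
Bernoulli(`p₂ᵢ`) indicators, with all probabilities in `[1/(1+Γ), Γ/(1+Γ)]`, and
`B̄₁ ~ Bin(I₁,κ)`, `B̄₂ ~ Bin(I₂,κ)` are independent with `κ = Γ/(1+Γ)`, then for
every monotone increasing `g` and every `k`,
`Pr(g(B₁,B₂) ≥ k) ≤ Pr(g(B̄₁,B̄₂) ≥ k)`. -/
theorem stmt_3 (I₁ I₂ : ℕ) (Γ : ℝ) (hΓ : 1 ≤ Γ)
    (p₁ : Fin I₁ → ℝ) (p₂ : Fin I₂ → ℝ)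
    (hp₁lo : ∀ i, 1 / (1 + Γ) ≤ p₁ i) (hp₁hi : ∀ i, p₁ i ≤ Γ / (1 + Γ))
    (hp₂lo : ∀ i, 1 / (1 + Γ) ≤ p₂ i) (hp₂hi : ∀ i, p₂ i ≤ Γ / (1 + Γ))
    (hp₁1 : ∀ i, ENNReal.ofReal (p₁ i) ≤ 1) (hp₂1 : ∀ i, ENNReal.ofReal (p₂ i) ≤ 1)
    (hκ1 : ENNReal.ofReal (Γ / (1 + Γ)) ≤ 1)
    (g : ℕ → ℕ → ℝ)
    (hg : ∀ b₁ b₂ b₁' b₂' : ℕ, b₁ ≤ b₁' → b₂ ≤ b₂' → g b₁ b₂ ≤ g b₁' b₂') :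
    ∀ k : ℝ,
      ((Measure.pi fun i : Fin I₁ =>
            (PMF.bernoulliENNReal (ENNReal.ofReal (p₁ i)) (hp₁1 i)).toMeasure).prod
          (Measure.pi fun i : Fin I₂ =>
            (PMF.bernoulliENNReal (ENNReal.ofReal (p₂ i)) (hp₂1 i)).toMeasure))
          {ω : (Fin I₁ → Bool) × (Fin I₂ → Bool) |
            k ≤ g (Finset.univ.filter fun i => ω.1 i).card
                  (Finset.univ.filter fun i => ω.2 i).card}
        ≤ ((Measure.pi fun _ : Fin I₁ =>
              (PMF.bernoulliENNReal (ENNReal.ofReal (Γ / (1 + Γ))) hκ1).toMeasure).prod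
            (Measure.pi fun _ : Fin I₂ =>
              (PMF.bernoulliENNReal (ENNReal.ofReal (Γ / (1 + Γ))) hκ1).toMeasure))
            {ω : (Fin I₁ → Bool) × (Fin I₂ → Bool) |
              k ≤ g (Finset.univ.filter fun i => ω.1 i).card
                    (Finset.univ.filter fun i => ω.2 i).card} := by
  intro k
  classical
  set κ : ℝ≥0∞ := ENNReal.ofReal (Γ / (1 + Γ)) with hκ
  set χ : (Fin I₁ → Bool) × (Fin I₂ → Bool) → ℝ≥0∞ :=
    fun ω => if k ≤ g (Finset.univ.filter fun i => ω.1 i).card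
        (Finset.univ.filter fun i => ω.2 i).card then 1 else 0 with hχ
  have hχmono : Monotone χ := by
    intro ω ω' h
    simp only [hχ]
    split_ifs with h1 h2
    · exact le_refl _
    · exact absurd (le_trans h1 (hg _ _ _ _ (card_mono h.1) (card_mono h.2))) h2
    · exact zero_le
    · exact le_refl _
  have key : ∀ (q₁ : Fin I₁ → ℝ≥0∞) (hq₁ : ∀ i, q₁ i ≤ 1)
      (q₂ : Fin I₂ → ℝ≥0∞) (hq₂ : ∀ i, q₂ i ≤ 1),
      ((Measure.pi fun i => (PMF.bernoulliENNReal (q₁ i) (hq₁ i)).toMeasure).prod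
          (Measure.pi fun i => (PMF.bernoulliENNReal (q₂ i) (hq₂ i)).toMeasure))
          {ω : (Fin I₁ → Bool) × (Fin I₂ → Bool) |
            k ≤ g (Finset.univ.filter fun i => ω.1 i).card
                  (Finset.univ.filter fun i => ω.2 i).card}
        = ∑ a : Fin I₁ → Bool,
            (∑ b : Fin I₂ → Bool, χ (a, b) * ∏ i, wt (q₂ i) (b i)) * ∏ i, wt (q₁ i) (a i) := by
    intro q₁ hq₁ q₂ hq₂
    rw [meas_eq_sum, Finset.sum_filter, Fintype.sum_prod_type]
    refine Finset.sum_congr rfl fun a _ => ?_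
    rw [Finset.sum_mul]
    refine Finset.sum_congr rfl fun b _ => ?_
    rw [show ({(a, b)} : Set ((Fin I₁ → Bool) × (Fin I₂ → Bool))) = {a} ×ˢ {b} from
        (Set.singleton_prod_singleton).symm,
      Measure.prod_prod, pi_bern_singleton, pi_bern_singleton]
    by_cases hP : k ≤ g (Finset.univ.filter fun i => a i).card (Finset.univ.filter fun i => b i).card
    · simp only [hχ, Set.mem_setOf_eq, hP, if_true, one_mul]
      ring
    · simp [hχ, Set.mem_setOf_eq, hP]
  rw [key _ hp₁1 _ hp₂1, key (fun _ => κ) (fun _ => hκ1) (fun _ => κ) (fun _ => hκ1)]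
  calc ∑ a : Fin I₁ → Bool,
        (∑ b : Fin I₂ → Bool, χ (a, b) * ∏ i, wt (ENNReal.ofReal (p₂ i)) (b i))
          * ∏ i, wt (ENNReal.ofReal (p₁ i)) (a i)
      ≤ ∑ a : Fin I₁ → Bool,
        (∑ b : Fin I₂ → Bool, χ (a, b) * ∏ i, wt κ (b i))
          * ∏ i, wt (ENNReal.ofReal (p₁ i)) (a i) := by
        refine Finset.sum_le_sum fun a _ => mul_le_mul_left ?_ _
        exact sum_mono (fun b => χ (a, b))
          (fun b b' hb => hχmono (Prod.mk_le_mk.2 ⟨le_rfl, hb⟩))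
          (fun i => ENNReal.ofReal (p₂ i)) (fun _ => κ)
          (fun i => ENNReal.ofReal_le_ofReal (hp₂hi i)) (fun _ => hκ1)
    _ ≤ ∑ a : Fin I₁ → Bool,
        (∑ b : Fin I₂ → Bool, χ (a, b) * ∏ i, wt κ (b i)) * ∏ i, wt κ (a i) := by
        exact sum_mono (fun a => ∑ b : Fin I₂ → Bool, χ (a, b) * ∏ i, wt κ (b i))
          (fun a a' ha => Finset.sum_le_sum fun b _ =>
            mul_le_mul_left (hχmono (Prod.mk_le_mk.2 ⟨ha, le_rfl⟩)) _)
          (fun i => ENNReal.ofReal (p₁ i)) (fun _ => κ)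
          (fun i => ENNReal.ofReal_le_ofReal (hp₁hi i)) (fun _ => hκ1)
end

section
/- In the favorable situation where Y₁,…,Y_I are i.i.d. from a continuous strictly increasing F, the proportion of positive Y_i among the λ₁·I pairs with largest |Y_i| converges in probability to ζ(λ₁)/λ₁ as I → ∞, where ζ(λ) = 1 − F(H⁻¹(1−λ)) and H(y) = F(y) − F(−y). -/
open MeasureTheory ProbabilityTheory Filter
open Topology Finset

section aux

variable {Ω : Type*} [MeasurableSpace Ω] (μ : Measure Ω) [IsProbabilityMeasure μ]

lemma aux_nested (v : ℕ → ℝ) (I k : ℕ) (c : ℝ) (hc : ∀ i ∈ Finset.range I, v i ≠ c) :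
    ((Finset.range I).filter fun i => ((Finset.range I).filter fun j => v i ≤ v j).card ≤ k) ⊆
      ((Finset.range I).filter fun i => c < v i) ∨
    ((Finset.range I).filter fun i => c < v i) ⊆
      ((Finset.range I).filter fun i => ((Finset.range I).filter fun j => v i ≤ v j).card ≤ k) := by
  by_cases h : ((Finset.range I).filter fun i => ((Finset.range I).filter fun j => v i ≤ v j).card ≤ k) ⊆
      ((Finset.range I).filter fun i => c < v i)
  · exact Or.inl h
  · right
    rw [Finset.not_subset] at h
    obtain ⟨i, hiS, hiT⟩ := h
    rw [mem_filter] at hiS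
    have hiI := hiS.1
    have hcnt := hiS.2
    have hvi : v i < c := by
      rcases lt_trichotomy (v i) c with h' | h' | h'
      · exact h'
      · exact absurd h' (hc i hiI)
      · exact absurd (mem_filter.mpr ⟨hiI, h'⟩) hiT
    intro t ht
    rw [mem_filter] at ht ⊢
    refine ⟨ht.1, le_trans (Finset.card_le_card ?_) hcnt⟩
    intro j hj
    rw [mem_filter] at hj ⊢
    exact ⟨hj.1, le_trans (le_of_lt (hvi.trans ht.2)) hj.2⟩

lemma aux_card (v : ℕ → ℝ) (I k : ℕ)
    (hv : ∀ i ∈ Finset.range I, ∀ j ∈ Finset.range I, i ≠ j → v i ≠ v j) :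
    ((Finset.range I).filter fun i =>
      ((Finset.range I).filter fun j => v i ≤ v j).card ≤ k).card = min k I := by
  set r : ℕ → ℕ := fun i => ((Finset.range I).filter fun j => v i ≤ v j).card with hr
  have hmono : ∀ i ∈ Finset.range I, ∀ j ∈ Finset.range I, v i < v j → r j < r i := by
    intro i hi j hj hij
    apply Finset.card_lt_card
    constructor
    · intro x hx
      rw [mem_filter] at hx ⊢
      exact ⟨hx.1, le_trans hij.le hx.2⟩
    · intro hsub
      have h2 := hsub (mem_filter.mpr ⟨hi, le_refl (v i)⟩)
      rw [mem_filter] at h2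
      exact absurd h2.2 (not_le.mpr hij)
  have hinj : Set.InjOn r (Finset.range I) := by
    intro i hi j hj hij
    by_contra hne
    have hvne := hv i (by simpa using hi) j (by simpa using hj) hne
    rcases lt_or_gt_of_ne hvne with h' | h'
    · exact absurd hij.symm (Nat.ne_of_lt (hmono i (by simpa using hi) j (by simpa using hj) h'))
    · exact absurd hij (Nat.ne_of_lt (hmono j (by simpa using hj) i (by simpa using hi) h'))
  have hsub1 : (Finset.range I).image r ⊆ Finset.Icc 1 I := by
    intro x hx
    rw [Finset.mem_image] at hx
    obtain ⟨i, hi, rfl⟩ := hx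
    rw [Finset.mem_Icc]
    constructor
    · have : i ∈ (Finset.range I).filter fun j => v i ≤ v j := mem_filter.mpr ⟨hi, le_refl _⟩
      exact Finset.card_pos.mpr ⟨i, this⟩
    · calc r i ≤ (Finset.range I).card := Finset.card_filter_le _ _
        _ = I := Finset.card_range I
  have himg : (Finset.range I).image r = Finset.Icc 1 I := by
    apply Finset.eq_of_subset_of_card_le hsub1
    rw [Nat.card_Icc, Finset.card_image_of_injOn hinj, Finset.card_range]
    omega
  have hSimg : ((Finset.range I).filter fun i => r i ≤ k).image r
      = (Finset.Icc 1 I).filter (· ≤ k) := by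
    rw [← himg, Finset.filter_image]
  have hcard : ((Finset.range I).filter fun i => r i ≤ k).card
      = (((Finset.range I).filter fun i => r i ≤ k).image r).card :=
    (Finset.card_image_of_injOn (hinj.mono (by
      intro x hx
      exact Finset.mem_coe.mpr (Finset.filter_subset _ _ (Finset.mem_coe.mp hx))))).symm
  rw [hcard, hSimg]
  have : (Finset.Icc 1 I).filter (· ≤ k) = Finset.Icc 1 (min k I) := by
    ext x
    simp only [Finset.mem_filter, Finset.mem_Icc]
    omega
  rw [this, Nat.card_Icc]
  omega

lemma aux_filter_le {S T : Finset ℕ} (hST : S ⊆ T) (p : ℕ → Prop) [DecidablePred p] :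
    (S.filter p).card ≤ (T.filter p).card ∧
      (T.filter p).card ≤ (S.filter p).card + (T.card - S.card) := by
  constructor
  · exact Finset.card_le_card (Finset.filter_subset_filter p hST)
  · have h2 : T.filter p ⊆ S.filter p ∪ (T \ S) := by
      intro a ha
      rw [mem_filter] at ha
      by_cases h : a ∈ S
      · exact Finset.mem_union_left _ (mem_filter.mpr ⟨h, ha.2⟩)
      · exact Finset.mem_union_right _ (Finset.mem_sdiff.mpr ⟨ha.1, h⟩)
    calc (T.filter p).card ≤ (S.filter p ∪ (T \ S)).card := Finset.card_le_card h2
      _ ≤ (S.filter p).card + (T \ S).card := Finset.card_union_le _ _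
      _ = (S.filter p).card + (T.card - S.card) := by rw [Finset.card_sdiff_of_subset hST]

lemma aux_key_of_subset {S T : Finset ℕ} (h : S ⊆ T) (p : ℕ → Prop) [DecidablePred p] :
    |((S.filter p).card : ℝ) - ((T.filter p).card : ℝ)| ≤ |((S.card : ℝ)) - (T.card : ℝ)| := by
  obtain ⟨h1, h2⟩ := aux_filter_le h p
  have hc : S.card ≤ T.card := Finset.card_le_card h
  have e1 : ((S.filter p).card : ℝ) ≤ ((T.filter p).card : ℝ) := by exact_mod_cast h1
  have e2 : ((T.filter p).card : ℝ) ≤ ((S.filter p).card : ℝ) + ((T.card : ℝ) - (S.card : ℝ)) := by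
    have := h2
    calc ((T.filter p).card : ℝ) ≤ (((S.filter p).card + (T.card - S.card) : ℕ) : ℝ) := by
          exact_mod_cast h2
      _ = ((S.filter p).card : ℝ) + ((T.card : ℝ) - (S.card : ℝ)) := by push_cast [Nat.cast_sub hc]; ring
  have ec : ((S.card : ℝ)) ≤ (T.card : ℝ) := by exact_mod_cast hc
  rw [abs_sub_le_iff]
  constructor
  · calc ((S.filter p).card : ℝ) - ((T.filter p).card : ℝ) ≤ 0 := by linarith
      _ ≤ |((S.card : ℝ)) - (T.card : ℝ)| := abs_nonneg _
  · calc ((T.filter p).card : ℝ) - ((S.filter p).card : ℝ) ≤ (T.card : ℝ) - (S.card : ℝ) := by linarith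
      _ = |((S.card : ℝ)) - (T.card : ℝ)| := by rw [abs_sub_comm, abs_of_nonneg (by linarith)]

lemma aux_key {S T : Finset ℕ} (h : S ⊆ T ∨ T ⊆ S) (p : ℕ → Prop) [DecidablePred p] :
    |((S.filter p).card : ℝ) - ((T.filter p).card : ℝ)| ≤ |((S.card : ℝ)) - (T.card : ℝ)| := by
  rcases h with h | h
  · exact aux_key_of_subset h p
  · rw [abs_sub_comm, abs_sub_comm (S.card : ℝ)]
    exact aux_key_of_subset h p

lemma aux_lt_eq (Y₀ : Ω → ℝ) (hY : Measurable Y₀) (F : ℝ → ℝ)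
    (hF : ∀ t : ℝ, F t = (μ {ω | Y₀ ω ≤ t}).toReal) (hFc : Continuous F) (c : ℝ) :
    μ {ω | Y₀ ω < c} = μ {ω | Y₀ ω ≤ c} := by
  have hsets : {ω | Y₀ ω < c} = ⋃ n : ℕ, {ω | Y₀ ω ≤ c - ((n : ℝ) + 1)⁻¹} := by
    ext ω
    simp only [Set.mem_setOf_eq, Set.mem_iUnion]
    constructor
    · intro h
      obtain ⟨n, hn⟩ := exists_nat_gt (c - Y₀ ω)⁻¹
      have h1 : (0:ℝ) < c - Y₀ ω := by linarith
      have h2 : (c - Y₀ ω)⁻¹ < (n : ℝ) + 1 := hn.trans (lt_add_one _)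
      have h3 : ((n : ℝ) + 1)⁻¹ < c - Y₀ ω := by
        have := inv_strictAnti₀ (inv_pos.mpr h1) h2
        rwa [inv_inv] at this
      exact ⟨n, by linarith⟩
    · rintro ⟨n, hn⟩
      have : (0:ℝ) < ((n:ℝ) + 1)⁻¹ := by positivity
      linarith
  have hmono : Monotone fun n : ℕ => {ω | Y₀ ω ≤ c - ((n : ℝ) + 1)⁻¹} := by
    intro n m hnm ω hω
    simp only [Set.mem_setOf_eq] at hω ⊢
    have h1 : ((m:ℝ) + 1)⁻¹ ≤ ((n:ℝ) + 1)⁻¹ := by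
      apply inv_anti₀ (by positivity)
      exact_mod_cast by omega
    linarith
  have htend := tendsto_measure_iUnion_atTop (μ := μ) hmono
  rw [← hsets] at htend
  have htoReal : Tendsto (fun n : ℕ => (μ {ω | Y₀ ω ≤ c - ((n : ℝ) + 1)⁻¹}).toReal) atTop
      (𝓝 ((μ {ω | Y₀ ω < c}).toReal)) :=
    (ENNReal.tendsto_toReal (measure_ne_top μ _)).comp htend
  have harg : Tendsto (fun n : ℕ => c - ((n : ℝ) + 1)⁻¹) atTop (𝓝 c) := by
    have h0 : Tendsto (fun n : ℕ => ((n : ℝ) + 1)⁻¹) atTop (𝓝 0) := by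
      simpa [one_div] using (tendsto_one_div_add_atTop_nhds_zero_nat :
        Tendsto (fun n : ℕ => 1 / ((n : ℝ) + 1)) atTop (𝓝 0))
    simpa using tendsto_const_nhds.sub h0
  have hFt : Tendsto (fun n : ℕ => F (c - ((n : ℝ) + 1)⁻¹)) atTop (𝓝 (F c)) :=
    (hFc.tendsto c).comp harg
  have heq : (fun n : ℕ => F (c - ((n : ℝ) + 1)⁻¹))
      = fun n : ℕ => (μ {ω | Y₀ ω ≤ c - ((n : ℝ) + 1)⁻¹}).toReal := funext fun n => hF _
  rw [heq] at hFt
  have h1 : (μ {ω | Y₀ ω < c}).toReal = F c := tendsto_nhds_unique htoReal hFt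
  have h2 : (μ {ω | Y₀ ω < c}).toReal = (μ {ω | Y₀ ω ≤ c}).toReal := by rw [h1, hF]
  exact (ENNReal.toReal_eq_toReal_iff' (measure_ne_top μ _) (measure_ne_top μ _)).mp h2

lemma aux_atom (Y₀ : Ω → ℝ) (hY : Measurable Y₀) (F : ℝ → ℝ)
    (hF : ∀ t : ℝ, F t = (μ {ω | Y₀ ω ≤ t}).toReal) (hFc : Continuous F) (c : ℝ) :
    μ {ω | Y₀ ω = c} = 0 := by
  have hd : Disjoint {ω | Y₀ ω < c} {ω | Y₀ ω = c} := by
    rw [Set.disjoint_left]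
    intro ω h1 h2
    simp only [Set.mem_setOf_eq] at h1 h2
    exact absurd h2 (ne_of_lt h1)
  have hu : {ω | Y₀ ω ≤ c} = {ω | Y₀ ω < c} ∪ {ω | Y₀ ω = c} := by
    ext ω
    simp only [Set.mem_setOf_eq, Set.mem_union]
    exact le_iff_lt_or_eq
  have hmeq : MeasurableSet {ω | Y₀ ω = c} := hY (measurableSet_singleton c)
  have h := measure_union (μ := μ) hd hmeq
  rw [← hu, aux_lt_eq μ Y₀ hY F hF hFc c] at h
  have hne := measure_ne_top μ {ω | Y₀ ω ≤ c}
  have h2 : μ {ω | Y₀ ω ≤ c} + 0 = μ {ω | Y₀ ω ≤ c} + μ {ω | Y₀ ω = c} := by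
    rw [add_zero]; exact h
  exact ((ENNReal.add_right_inj hne).mp h2).symm

lemma aux_atom_i (Y : ℕ → Ω → ℝ) (hYmeas : ∀ i, Measurable (Y i))
    (hident : ∀ i, Measure.map (Y i) μ = Measure.map (Y 0) μ)
    (h0 : ∀ c : ℝ, μ {ω | Y 0 ω = c} = 0) (i : ℕ) (c : ℝ) :
    μ {ω | Y i ω = c} = 0 := by
  have h1 : {ω | Y i ω = c} = Y i ⁻¹' {c} := by ext ω; simp
  have h2 : {ω | Y 0 ω = c} = Y 0 ⁻¹' {c} := by ext ω; simp
  rw [h1, ← Measure.map_apply (hYmeas i) (measurableSet_singleton c), hident i,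
    Measure.map_apply (hYmeas 0) (measurableSet_singleton c), ← h2]
  exact h0 c

lemma aux_pair (Y : ℕ → Ω → ℝ) (hYmeas : ∀ i, Measurable (Y i))
    (hindep : iIndepFun Y μ)
    (hatom : ∀ (i : ℕ) (c : ℝ), μ {ω | Y i ω = c} = 0)
    (i j : ℕ) (hij : i ≠ j) : μ {ω | |Y i ω| = |Y j ω|} = 0 := by
  have hind : IndepFun (Y i) (Y j) μ := hindep.indepFun hij
  have hmap := (indepFun_iff_map_prod_eq_prod_map_map (hYmeas i).aemeasurable
    (hYmeas j).aemeasurable).mp hind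
  have hs : MeasurableSet {p : ℝ × ℝ | |p.1| = |p.2|} :=
    measurableSet_eq_fun (measurable_fst.abs) (measurable_snd.abs)
  have hset : {ω | |Y i ω| = |Y j ω|} = (fun ω => (Y i ω, Y j ω)) ⁻¹' {p | |p.1| = |p.2|} := rfl
  rw [hset, ← Measure.map_apply ((hYmeas i).prodMk (hYmeas j)) hs, hmap, Measure.prod_apply hs]
  have hslice : ∀ x : ℝ, (μ.map (Y j)) (Prod.mk x ⁻¹' {p : ℝ × ℝ | |p.1| = |p.2|}) = 0 := by
    intro x
    have hsub : (Prod.mk x ⁻¹' {p : ℝ × ℝ | |p.1| = |p.2|}) ⊆ {x, -x} := by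
      intro y hy
      simp only [Set.mem_preimage, Set.mem_setOf_eq] at hy
      rcases abs_eq_abs.mp hy.symm with h | h
      · exact Set.mem_insert_iff.mpr (Or.inl h)
      · exact Set.mem_insert_iff.mpr (Or.inr h)
    apply measure_mono_null hsub
    have hx : μ.map (Y j) {x} = 0 := by
      rw [Measure.map_apply (hYmeas j) (measurableSet_singleton x)]
      have : Y j ⁻¹' {x} = {ω | Y j ω = x} := by ext ω; simp
      rw [this]; exact hatom j x
    have hnx : μ.map (Y j) {-x} = 0 := by
      rw [Measure.map_apply (hYmeas j) (measurableSet_singleton (-x))]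
      have : Y j ⁻¹' {-x} = {ω | Y j ω = -x} := by ext ω; simp
      rw [this]; exact hatom j (-x)
    have : ({x, -x} : Set ℝ) = {x} ∪ {-x} := rfl
    rw [this]
    exact measure_union_null hx hnx
  have : (fun x : ℝ => (μ.map (Y j)) (Prod.mk x ⁻¹' {p : ℝ × ℝ | |p.1| = |p.2|}))
      = fun _ => 0 := funext hslice
  rw [this, lintegral_zero]

lemma aux_slln (Y : ℕ → Ω → ℝ) (hYmeas : ∀ i, Measurable (Y i))
    (hindep : iIndepFun Y μ)
    (hident : ∀ i, Measure.map (Y i) μ = Measure.map (Y 0) μ)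
    (g : ℝ → ℝ) (hg : Measurable g) (hgb : ∀ t, ‖g t‖ ≤ 1) :
    ∀ᵐ ω ∂μ, Tendsto (fun n : ℕ => (n:ℝ)⁻¹ * ∑ i ∈ Finset.range n, g (Y i ω)) atTop
      (𝓝 (∫ ω, g (Y 0 ω) ∂μ)) := by
  have hint : Integrable (fun ω => g (Y 0 ω)) μ :=
    Integrable.mono' (integrable_const 1) (hg.comp (hYmeas 0)).aestronglyMeasurable
      (ae_of_all _ fun ω => hgb _)
  have hpair : Pairwise (Function.onFun (IndepFun · · μ) fun i ω => g (Y i ω)) := fun i j hij =>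
    (hindep.indepFun hij).comp hg hg
  have hid : ∀ i, IdentDistrib (fun ω => g (Y i ω)) (fun ω => g (Y 0 ω)) μ μ := fun i =>
    IdentDistrib.comp ⟨(hYmeas i).aemeasurable, (hYmeas 0).aemeasurable, hident i⟩ hg
  have h := strong_law_ae (fun i ω => g (Y i ω)) hint hpair hid
  filter_upwards [h] with ω hω
  simpa [smul_eq_mul] using hω

lemma aux_integral_ite (p : Ω → Prop) [DecidablePred p] (hs : MeasurableSet {ω | p ω}) :
    ∫ ω, (if p ω then (1:ℝ) else 0) ∂μ = (μ {ω | p ω}).toReal := by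
  rw [← measureReal_def, ← integral_indicator_one hs]
  congr 1
  funext ω
  by_cases h : p ω
  · simp [h, Set.indicator_of_mem (show ω ∈ {ω | p ω} from h)]
  · simp [h, Set.indicator_of_notMem (show ω ∉ {ω | p ω} from h)]

lemma aux_m1 (Y₀ : Ω → ℝ) (hY : Measurable Y₀) (F : ℝ → ℝ)
    (hF : ∀ t : ℝ, F t = (μ {ω | Y₀ ω ≤ t}).toReal) (c : ℝ) :
    (μ {ω | c < Y₀ ω}).toReal = 1 - F c := by
  have hms : MeasurableSet {ω | Y₀ ω ≤ c} := measurableSet_le hY measurable_const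
  have hc : {ω | c < Y₀ ω} = {ω | Y₀ ω ≤ c}ᶜ := by ext ω; simp [not_le]
  rw [hc, prob_compl_eq_one_sub hms,
    ENNReal.toReal_sub_of_le prob_le_one ENNReal.one_ne_top, ENNReal.toReal_one, hF]

lemma aux_m2 (Y₀ : Ω → ℝ) (hY : Measurable Y₀) (F : ℝ → ℝ)
    (hF : ∀ t : ℝ, F t = (μ {ω | Y₀ ω ≤ t}).toReal) (hFc : Continuous F)
    (y₀ : ℝ) (hy₀ : 0 ≤ y₀) :
    (μ {ω | y₀ < |Y₀ ω|}).toReal = 1 - (F y₀ - F (-y₀)) := by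
  have habs : μ {ω | |Y₀ ω| ≤ y₀} = μ {ω | Y₀ ω ≤ y₀} - μ {ω | Y₀ ω ≤ -y₀} := by
    have hd : {ω | |Y₀ ω| ≤ y₀} = {ω | Y₀ ω ≤ y₀} \ {ω | Y₀ ω < -y₀} := by
      ext ω
      simp only [Set.mem_setOf_eq, Set.mem_diff, abs_le, not_lt]
      constructor
      · rintro ⟨h1, h2⟩; exact ⟨h2, h1⟩
      · rintro ⟨h1, h2⟩; exact ⟨h2, h1⟩
    have hsub : {ω | Y₀ ω < -y₀} ⊆ {ω | Y₀ ω ≤ y₀} := by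
      intro ω h
      simp only [Set.mem_setOf_eq] at h ⊢
      linarith
    rw [hd, measure_diff hsub (measurableSet_lt hY measurable_const).nullMeasurableSet
      (measure_ne_top μ _), aux_lt_eq μ Y₀ hY F hF hFc (-y₀)]
  have htr : (μ {ω | |Y₀ ω| ≤ y₀}).toReal = F y₀ - F (-y₀) := by
    rw [habs, ENNReal.toReal_sub_of_le (measure_mono (fun ω h => by
      simp only [Set.mem_setOf_eq] at h ⊢; linarith)) (measure_ne_top μ _), hF, hF]
  have hms : MeasurableSet {ω | |Y₀ ω| ≤ y₀} := measurableSet_le hY.abs measurable_const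
  have hc : {ω | y₀ < |Y₀ ω|} = {ω | |Y₀ ω| ≤ y₀}ᶜ := by ext ω; simp [not_le]
  rw [hc, prob_compl_eq_one_sub hms,
    ENNReal.toReal_sub_of_le prob_le_one ENNReal.one_ne_top, ENNReal.toReal_one, htr]

end aux

/-- In the favorable situation, with `Y₁, Y₂, …` i.i.d. from a continuous strictly
increasing CDF `F`, the proportion of positive `Y_i` among the `⌈λ₁·I⌉` pairs with
largest `|Y_i|` converges in probability to `ζ(λ₁)/λ₁`, where
`ζ(λ₁) = 1 − F(H⁻¹(1−λ₁))` and `H(y) = F(y) − F(−y)`, i.e. `y₀ := H⁻¹(1−λ₁)`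
satisfies `y₀ ≥ 0` and `F(y₀) − F(−y₀) = 1 − λ₁`. -/
theorem stmt_10 {Ω : Type*} [MeasurableSpace Ω] (μ : Measure Ω) [IsProbabilityMeasure μ]
    (Y : ℕ → Ω → ℝ) (hYmeas : ∀ i, Measurable (Y i))
    (hindep : iIndepFun Y μ)
    (hident : ∀ i, Measure.map (Y i) μ = Measure.map (Y 0) μ)
    (F : ℝ → ℝ) (hF : ∀ t : ℝ, F t = (μ {ω | Y 0 ω ≤ t}).toReal)
    (hFc : Continuous F) (hFm : StrictMono F)
    (lam₁ : ℝ) (hlam₁ : 0 < lam₁) (hlam₁' : lam₁ < 1)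
    (y₀ : ℝ) (hy₀ : 0 ≤ y₀) (hH : F y₀ - F (-y₀) = 1 - lam₁) :
    ∀ ε : ℝ, 0 < ε →
      Tendsto
        (fun I : ℕ =>
          μ {ω | ε ≤
            |((((Finset.range I).filter fun i =>
                    0 < Y i ω ∧
                      (((Finset.range I).filter fun j =>
                          |Y i ω| ≤ |Y j ω|).card ≤ ⌈lam₁ * I⌉₊)).card : ℝ) /
                (⌈lam₁ * I⌉₊ : ℝ)) - (1 - F y₀) / lam₁|})
        atTop (nhds 0) := by
  intro ε hε
  -- atoms
  have hatom0 : ∀ c : ℝ, μ {ω | Y 0 ω = c} = 0 :=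
    aux_atom μ (Y 0) (hYmeas 0) F hF hFc
  have hatom : ∀ (i : ℕ) (c : ℝ), μ {ω | Y i ω = c} = 0 :=
    aux_atom_i μ Y hYmeas hident hatom0
  -- a.e. distinctness of |Y i|
  have haed : ∀ᵐ ω ∂μ, ∀ i j : ℕ, i ≠ j → |Y i ω| ≠ |Y j ω| := by
    rw [ae_all_iff]
    intro i
    rw [ae_all_iff]
    intro j
    rcases eq_or_ne i j with h | h
    · exact ae_of_all _ fun ω hij => absurd h hij
    · have h0 := aux_pair μ Y hYmeas hindep hatom i j h
      rw [ae_iff]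
      apply measure_mono_null _ h0
      intro ω hω
      simp only [Set.mem_setOf_eq, Classical.not_imp, not_not] at hω
      exact hω.2
  -- a.e. |Y i| ≠ y₀
  have haey : ∀ᵐ ω ∂μ, ∀ i : ℕ, |Y i ω| ≠ y₀ := by
    rw [ae_all_iff]
    intro i
    rw [ae_iff]
    apply measure_mono_null (?_ : _ ⊆ {ω | Y i ω = y₀} ∪ {ω | Y i ω = -y₀})
      (measure_union_null (hatom i y₀) (hatom i (-y₀)))
    intro ω hω
    simp only [Set.mem_setOf_eq, not_not] at hω
    rcases (abs_eq hy₀).mp hω with h | h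
    · exact Or.inl h
    · exact Or.inr h
  -- SLLN for indicators of {Y > y₀}
  have hg1 : Measurable (fun t : ℝ => if y₀ < t then (1:ℝ) else 0) :=
    Measurable.ite (measurableSet_lt measurable_const measurable_id) measurable_const
      measurable_const
  have hb1 : ∀ t : ℝ, ‖if y₀ < t then (1:ℝ) else 0‖ ≤ 1 := by
    intro t; split <;> simp
  have hs1 := aux_slln μ Y hYmeas hindep hident _ hg1 hb1
  have hE1 : (∫ ω, (if y₀ < Y 0 ω then (1:ℝ) else 0) ∂μ) = 1 - F y₀ := by
    rw [aux_integral_ite μ (fun ω => y₀ < Y 0 ω)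
      (measurableSet_lt measurable_const (hYmeas 0))]
    exact aux_m1 μ (Y 0) (hYmeas 0) F hF y₀
  rw [hE1] at hs1
  -- SLLN for indicators of {|Y| > y₀}
  have hg2 : Measurable (fun t : ℝ => if y₀ < |t| then (1:ℝ) else 0) :=
    Measurable.ite (measurableSet_lt measurable_const measurable_abs) measurable_const
      measurable_const
  have hb2 : ∀ t : ℝ, ‖if y₀ < |t| then (1:ℝ) else 0‖ ≤ 1 := by
    intro t; split <;> simp
  have hs2 := aux_slln μ Y hYmeas hindep hident _ hg2 hb2
  have hE2 : (∫ ω, (if y₀ < |Y 0 ω| then (1:ℝ) else 0) ∂μ) = lam₁ := by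
    rw [aux_integral_ite μ (fun ω => y₀ < |Y 0 ω|)
      (measurableSet_lt measurable_const (hYmeas 0).abs)]
    rw [aux_m2 μ (Y 0) (hYmeas 0) F hF hFc y₀ hy₀, hH]
    ring
  rw [hE2] at hs2
  -- deterministic: ceil ratio tends to lam₁
  have hk : Tendsto (fun n : ℕ => ((⌈lam₁ * n⌉₊ : ℝ)) / n) atTop (𝓝 lam₁) := by
    have hup : Tendsto (fun n : ℕ => lam₁ + 1 / n) atTop (𝓝 lam₁) := by
      simpa using tendsto_const_nhds.add (tendsto_one_div_atTop_nhds_zero_nat (𝕜 := ℝ))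
    apply tendsto_of_tendsto_of_tendsto_of_le_of_le' tendsto_const_nhds hup
    · filter_upwards [eventually_ge_atTop 1] with n hn
      have hn0 : (0:ℝ) < n := by exact_mod_cast hn
      rw [le_div_iff₀ hn0]
      exact Nat.le_ceil _
    · filter_upwards [eventually_ge_atTop 1] with n hn
      have hn0 : (0:ℝ) < n := by exact_mod_cast hn
      rw [div_le_iff₀ hn0]
      have h1 : (⌈lam₁ * n⌉₊ : ℝ) < lam₁ * n + 1 :=
        Nat.ceil_lt_add_one (by positivity)
      have h2 : lam₁ * n + 1 = (lam₁ + 1 / n) * n := by field_simp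
      linarith
  -- the a.e. convergence of the statistic
  have hmain : ∀ᵐ ω ∂μ, Tendsto (fun I : ℕ =>
      ((((Finset.range I).filter fun i =>
            0 < Y i ω ∧
              (((Finset.range I).filter fun j =>
                  |Y i ω| ≤ |Y j ω|).card ≤ ⌈lam₁ * I⌉₊)).card : ℝ) /
        (⌈lam₁ * I⌉₊ : ℝ))) atTop (𝓝 ((1 - F y₀) / lam₁)) := by
    filter_upwards [hs1, hs2, haed, haey] with ω h1 h2 hd hy
    have ha : Tendsto (fun n : ℕ =>
        (((Finset.range n).filter fun i => y₀ < Y i ω).card : ℝ) / n) atTop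
        (𝓝 (1 - F y₀)) := by
      apply h1.congr
      intro n
      rw [Finset.sum_boole, inv_mul_eq_div]
    have ht : Tendsto (fun n : ℕ =>
        (((Finset.range n).filter fun i => y₀ < |Y i ω|).card : ℝ) / n) atTop
        (𝓝 lam₁) := by
      apply h2.congr
      intro n
      rw [Finset.sum_boole, inv_mul_eq_div]
    -- key combinatorial bound
    have hkey : ∀ n : ℕ,
        abs ((Finset.card ((Finset.range n).filter (fun i =>
              0 < Y i ω ∧
                Finset.card ((Finset.range n).filter (fun j =>
                    |Y i ω| ≤ |Y j ω|)) ≤ ⌈lam₁ * n⌉₊)) : ℝ)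
          - (Finset.card ((Finset.range n).filter (fun i => y₀ < Y i ω)) : ℝ))
        ≤ abs ((⌈lam₁ * n⌉₊ : ℝ)
          - (Finset.card ((Finset.range n).filter (fun i => y₀ < |Y i ω|)) : ℝ)) := by
      intro n
      have hnest := aux_nested (fun i => |Y i ω|) n ⌈lam₁ * n⌉₊ y₀ (fun i _ => hy i)
      have hcardS := aux_card (fun i => |Y i ω|) n ⌈lam₁ * n⌉₊
        (fun i _ j _ hij => hd i j hij)
      have hkn : ⌈lam₁ * n⌉₊ ≤ n := by
        rw [Nat.ceil_le]
        calc lam₁ * n ≤ 1 * n := mul_le_mul_of_nonneg_right hlam₁'.le (Nat.cast_nonneg n)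
          _ = n := one_mul _
      rw [min_eq_left hkn] at hcardS
      have hB : ((Finset.range n).filter fun i =>
            0 < Y i ω ∧
              (((Finset.range n).filter fun j =>
                  |Y i ω| ≤ |Y j ω|).card ≤ ⌈lam₁ * n⌉₊))
          = ((Finset.range n).filter fun i =>
              ((Finset.range n).filter fun j =>
                  |Y i ω| ≤ |Y j ω|).card ≤ ⌈lam₁ * n⌉₊).filter
              (fun i => 0 < Y i ω) := by
        rw [Finset.filter_filter]
        apply Finset.filter_congr
        intro i _
        simp [and_comm]
      have hA : (((Finset.range n).filter fun i => y₀ < |Y i ω|).filter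
            (fun i => 0 < Y i ω))
          = (Finset.range n).filter fun i => y₀ < Y i ω := by
        rw [Finset.filter_filter]
        apply Finset.filter_congr
        intro i _
        constructor
        · rintro ⟨h1', h2'⟩
          rwa [abs_of_pos h2'] at h1'
        · intro h'
          have hpos : 0 < Y i ω := lt_of_le_of_lt hy₀ h'
          exact ⟨by rwa [abs_of_pos hpos], hpos⟩
      rw [hB, ← hA]
      have hres := aux_key hnest (fun i => 0 < Y i ω)
      rw [hcardS] at hres
      exact hres
    -- assemble limits
    have hak : Tendsto (fun n : ℕ =>
        (((Finset.range n).filter fun i => y₀ < Y i ω).card : ℝ) / (⌈lam₁ * n⌉₊ : ℝ))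
        atTop (𝓝 ((1 - F y₀) / lam₁)) := by
      have hdiv := ha.div hk (ne_of_gt hlam₁)
      apply hdiv.congr'
      filter_upwards [eventually_ge_atTop 1] with n hn
      have hn0 : (n : ℝ) ≠ 0 := by
        have : (0:ℝ) < n := by exact_mod_cast hn
        exact this.ne'
      simp only [Pi.div_apply]
      rw [div_div_div_cancel_right₀ hn0]
    have hr : Tendsto (fun n : ℕ =>
        (((((Finset.range n).filter fun i =>
              0 < Y i ω ∧
                (((Finset.range n).filter fun j =>
                    |Y i ω| ≤ |Y j ω|).card ≤ ⌈lam₁ * n⌉₊)).card : ℝ)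
          - (((Finset.range n).filter fun i => y₀ < Y i ω).card : ℝ))
          / (⌈lam₁ * n⌉₊ : ℝ))) atTop (𝓝 0) := by
      apply squeeze_zero_norm'
        (a := fun n : ℕ => abs (((⌈lam₁ * n⌉₊ : ℝ)) / n
          - ((((Finset.range n).filter (fun i => y₀ < |Y i ω|)).card : ℝ)) / n)
          / ((⌈lam₁ * n⌉₊ : ℝ) / n))
      · filter_upwards [eventually_ge_atTop 1] with n hn
        have hn0 : (0:ℝ) < n := by exact_mod_cast hn
        have hkpos : (0:ℝ) < (⌈lam₁ * n⌉₊ : ℝ) := by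
          have : 0 < ⌈lam₁ * n⌉₊ := Nat.ceil_pos.mpr (by positivity)
          exact_mod_cast this
        rw [Real.norm_eq_abs, abs_div, abs_of_pos hkpos, div_sub_div_same, abs_div,
          abs_of_pos hn0, div_div_div_cancel_right₀ hn0.ne']
        exact div_le_div_of_nonneg_right (hkey n) hkpos.le
      · have := ((hk.sub ht).abs.div hk (ne_of_gt hlam₁))
        simpa [Pi.div_def] using this
    have hsum := hak.add hr
    rw [add_zero] at hsum
    apply hsum.congr
    intro n
    rw [← add_div]
    congr 1
    ring
  -- measurability of the statistic
  have hmeasf : ∀ I : ℕ, AEStronglyMeasurable (fun ω =>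
      ((((Finset.range I).filter fun i =>
            0 < Y i ω ∧
              (((Finset.range I).filter fun j =>
                  |Y i ω| ≤ |Y j ω|).card ≤ ⌈lam₁ * I⌉₊)).card : ℝ) /
        (⌈lam₁ * I⌉₊ : ℝ))) μ := by
    intro I
    apply Measurable.aestronglyMeasurable
    apply Measurable.div_const
    have hrw : (fun ω => ((((Finset.range I).filter fun i =>
            0 < Y i ω ∧
              (((Finset.range I).filter fun j =>
                  |Y i ω| ≤ |Y j ω|).card ≤ ⌈lam₁ * I⌉₊)).card : ℝ)))
        = fun ω => ∑ i ∈ Finset.range I,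
            if 0 < Y i ω ∧
              (((Finset.range I).filter fun j =>
                  |Y i ω| ≤ |Y j ω|).card ≤ ⌈lam₁ * I⌉₊) then (1:ℝ) else 0 := by
      funext ω
      rw [Finset.sum_boole]
    rw [hrw]
    apply Finset.measurable_sum
    intro i _
    have hcardmeas : Measurable (fun ω =>
        ((Finset.range I).filter fun j => |Y i ω| ≤ |Y j ω|).card) := by
      have : (fun ω => ((Finset.range I).filter fun j => |Y i ω| ≤ |Y j ω|).card)
          = fun ω => ∑ j ∈ Finset.range I, if |Y i ω| ≤ |Y j ω| then 1 else 0 := by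
        funext ω
        rw [Finset.card_filter]
      rw [this]
      apply Finset.measurable_sum
      intro j _
      exact Measurable.ite (measurableSet_le (hYmeas i).abs (hYmeas j).abs)
        measurable_const measurable_const
    apply Measurable.ite ?_ measurable_const measurable_const
    have : {ω | 0 < Y i ω ∧
        (((Finset.range I).filter fun j => |Y i ω| ≤ |Y j ω|).card ≤ ⌈lam₁ * I⌉₊)}
        = {ω | 0 < Y i ω} ∩ {ω | (((Finset.range I).filter fun j =>
            |Y i ω| ≤ |Y j ω|).card ≤ ⌈lam₁ * I⌉₊)} := rfl
    rw [this]
    exact (measurableSet_lt measurable_const (hYmeas i)).inter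
      (hcardmeas measurableSet_Iic)
  have hTIM := tendstoInMeasure_of_tendsto_ae hmeasf hmain
  have hfin := tendstoInMeasure_iff_dist.mp hTIM ε hε
  simpa [Real.dist_eq] using hfin
end
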